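/- Let Q be a finite quiver without cycles of length m with starting set S, and let ⟨,⟩ be an inner product on n_Q for which Path(Q) is an orthogonal basis; write x̄ = x/|x| for x ∈ Path(Q). Then for each x ∈ S, the Ricci operator of (n_Q,⟨,⟩) satisfies Ric(x̄) = ( −(1/2) Σ_{y ∈ Path(Q), t(x)=s(y)} ⟨[x̄,ȳ], \overline{xy}⟩² ) x̄. -/

import Mathlib

open scoped Classical

noncomputable section

variable {V E : Type*}

/-- A (positive-length) path in the quiver `(V, E, s, t)`: a nonempty list of arrows
in which consecutive arrows are composable, i.e. `t αᵢ = s αᵢ₊₁`. -/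
def IsPath (s t : E → V) (l : List E) : Prop :=
  l ≠ [] ∧ l.Chain' (fun a b => t a = s b)

/-- The source of a (nonempty) list of arrows, as an `Option`. -/
def src? (s : E → V) (l : List E) : Option V := l.head?.map s

/-- The target of a (nonempty) list of arrows, as an `Option`. -/
def tgt? (t : E → V) (l : List E) : Option V := l.getLast?.map t

/-- The quiver has no cycles: there is no path whose source equals its target. -/
def NoCycles (s t : E → V) : Prop :=
  ∀ l : List E, IsPath s t l → src? s l ≠ tgt? t l

/-- `m` is the maximum of the lengths of paths of the quiver (the length of the quiver). -/
def IsMaxPathLen (s t : E → V) (m : ℕ) : Prop :=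
  (∃ l : List E, IsPath s t l ∧ l.length = m) ∧ ∀ l : List E, IsPath s t l → l.length ≤ m

/-- The set `Path(Q)` of all paths of length `≥ 1`, as a subtype of lists of arrows. -/
abbrev PathQ (s t : E → V) := {l : List E // IsPath s t l}

/-- The underlying vector space of the Lie algebra `n_Q` obtained from the quiver:
the real vector space with basis `Path(Q)`. -/
abbrev nQ (s t : E → V) := PathQ s t →₀ ℝ

/-- The Lie bracket of two basis paths: `[x, y] = xy` if the concatenation `xy` is a path,
`[x, y] = -yx` if the concatenation `yx` is a path, and `[x, y] = 0` otherwise. -/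
def braBasis (s t : E → V) (x y : PathQ s t) : nQ s t :=
  if h : IsPath s t (x.val ++ y.val) then Finsupp.single ⟨x.val ++ y.val, h⟩ 1
  else if h' : IsPath s t (y.val ++ x.val) then -Finsupp.single ⟨y.val ++ x.val, h'⟩ 1
  else 0

/-- The Lie bracket of `n_Q`, extended bilinearly from basis paths. -/
def bra (s t : E → V) (u v : nQ s t) : nQ s t :=
  u.sum fun x cx => v.sum fun y cy => (cx * cy) • braBasis s t x y

/-- The span of all brackets of elements of two subspaces of `n_Q`. -/
def braSpan (s t : E → V) (M N : Submodule ℝ (nQ s t)) : Submodule ℝ (nQ s t) :=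
  Submodule.span ℝ {z | ∃ u ∈ M, ∃ v ∈ N, z = bra s t u v}

/-- The starting set `S` of a quiver of length `m`: the set of arrows `a` such that
`a x` is a path of length `m` for some path `x`. -/
def startSet (s t : E → V) (m : ℕ) : Set E :=
  {a | ∃ x : List E, IsPath s t x ∧ IsPath s t (a :: x) ∧ (a :: x).length = m}

/-- The arrow set `E' = (E ∖ S) ∪ {ab ∈ Path(Q) : a ∈ S, b ∈ E}` of the quiver `Q'`,
realized as a set of lists of arrows of `Q`. -/
def edgesQ' (s t : E → V) (m : ℕ) : Set (List E) :=
  {l | (∃ a : E, a ∉ startSet s t m ∧ l = [a]) ∨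
       (∃ a b : E, a ∈ startSet s t m ∧ IsPath s t [a, b] ∧ l = [a, b])}

/-- `L` is a decomposition of the list `l` of arrows as a path of the quiver `Q'`:
a nonempty chain of consecutively composable `Q'`-arrows whose concatenation is `l`. -/
def IsDecompQ' (s t : E → V) (m : ℕ) (L : List (List E)) (l : List E) : Prop :=
  L ≠ [] ∧ (∀ p ∈ L, p ∈ edgesQ' s t m) ∧
    L.Chain' (fun p q => tgt? t p = src? s q) ∧ L.flatten = l

/-- `l` underlies a path of the quiver `Q'`. -/
def IsPathQ' (s t : E → V) (m : ℕ) (l : List E) : Prop :=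
  ∃ L : List (List E), IsDecompQ' s t m L l

/-- `f : E → E` is an automorphism of the quiver `(V, E, s, t)`. -/
def IsQuivAut (s t : E → V) (f : E → E) : Prop :=
  Function.Bijective f ∧ ∀ x y : E, (t x = s y ↔ t (f x) = s (f y))

/-- `g` is an automorphism of the quiver whose arrow set is the set `ES` of lists of
arrows of `Q` (such as the quiver `Q'` with arrow set `edgesQ'`). -/
def IsQuivAutOn (s t : E → V) (ES : Set (List E)) (g : List E → List E) : Prop :=
  Set.BijOn g ES ES ∧
    ∀ p ∈ ES, ∀ q ∈ ES, (tgt? t p = src? s q ↔ tgt? t (g p) = src? s (g q))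

/-- The subspace `n' = span Path(Q')` of `n_Q`. -/
def nQ'span (s t : E → V) (m : ℕ) : Submodule ℝ (nQ s t) :=
  Submodule.span ℝ {u | ∃ p : PathQ s t, IsPathQ' s t m p.val ∧ u = Finsupp.single p 1}

/-- A single arrow, regarded as a path of length one. -/
def edgePath (s t : E → V) (a : E) : PathQ s t := ⟨[a], by
  refine ⟨List.cons_ne_nil _ _, ?_⟩
  first
  | exact List.chain'_singleton _
  | exact List.isChain_singleton _
  | simp [List.Chain']
  | simp [List.IsChain]⟩

/-- The normalization `x̄ = x / |x|` of a basis path `x`, with respect to the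
inner product `B`. -/
def ebar (s t : E → V) (B : nQ s t →ₗ[ℝ] nQ s t →ₗ[ℝ] ℝ) (p : PathQ s t) : nQ s t :=
  (Real.sqrt (B (Finsupp.single p 1) (Finsupp.single p 1)))⁻¹ • Finsupp.single p 1

section Helpers

variable {V E : Type*}

lemma bra_single_single (s t : E → V) (p q : PathQ s t) (c d : ℝ) :
    bra s t (Finsupp.single p c) (Finsupp.single q d) = (c * d) • braBasis s t p q := by
  unfold bra
  rw [Finsupp.sum_single_index, Finsupp.sum_single_index]
  · simp
  · simp

lemma pathQ_finite [Finite E] {s t : E → V} {m : ℕ} (hm : IsMaxPathLen s t m) :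
    Finite (PathQ s t) := by
  have h : {l : List E | IsPath s t l} ⊆ {l : List E | l.length ≤ m} :=
    fun l hl => hm.2 l hl
  exact ((List.finite_length_le E m).subset h).to_subtype

lemma isPath_big_append {s t : E → V} {l₁ l₂ : List E}
    (h₁ : IsPath s t l₁) (h₂ : IsPath s t l₂)
    (h : ∀ x ∈ l₁.getLast?, ∀ y ∈ l₂.head?, t x = s y) : IsPath s t (l₁ ++ l₂) :=
  ⟨by simp [h₁.1], h₁.2.append h₂.2 h⟩

/-- No nonempty path can end with an arrow of the starting set. -/
lemma no_path_ends_start {s t : E → V} {m : ℕ} (hm : IsMaxPathLen s t m)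
    {a : E} (ha : a ∈ startSet s t m) :
    ∀ l : List E, l ≠ [] → ¬ IsPath s t (l ++ [a]) := by
  intro l hl hp
  obtain ⟨x0, hx0, hax, hlen⟩ := ha
  have hchain := hp.2
  rw [List.Chain', List.isChain_append] at hchain
  obtain ⟨hc1, -, hconn⟩ := hchain
  have hbig : IsPath s t (l ++ (a :: x0)) := by
    refine ⟨by simp [hl], hc1.append hax.2 ?_⟩
    intro x hx y hy
    simp only [List.head?_cons, Option.mem_def, Option.some.injEq] at hy
    subst hy
    exact hconn x hx a (by simp)
  have := hm.2 _ hbig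
  rw [List.length_append] at this
  have hl1 : 1 ≤ l.length := List.length_pos_iff.mpr hl
  omega

lemma snoc_eq_cons_self {α : Type*} : ∀ (i : List α) (c b : α), i ++ [c] = b :: i → c = b := by
  intro i
  induction i with
  | nil => intro c b h; simpa using h
  | cons d i ih =>
      intro c b h
      simp only [List.cons_append, List.cons.injEq] at h
      exact (ih c d h.2).trans h.1

end Helpers
section RLen

variable {V E : Type*}

/-- The norm `|x|` of a basis path w.r.t. `B`. -/
noncomputable def rlen (s t : E → V) (B : nQ s t →ₗ[ℝ] nQ s t →ₗ[ℝ] ℝ) (p : PathQ s t) : ℝ :=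
  Real.sqrt (B (Finsupp.single p 1) (Finsupp.single p 1))

lemma ebar_eq_single (s t : E → V) (B : nQ s t →ₗ[ℝ] nQ s t →ₗ[ℝ] ℝ) (p : PathQ s t) :
    ebar s t B p = Finsupp.single p (rlen s t B p)⁻¹ := by
  rw [ebar, rlen, Finsupp.smul_single', mul_one]

lemma rlen_pos (s t : E → V) (B : nQ s t →ₗ[ℝ] nQ s t →ₗ[ℝ] ℝ)
    (hpos : ∀ u : nQ s t, u ≠ 0 → 0 < B u u) (p : PathQ s t) : 0 < rlen s t B p :=
  Real.sqrt_pos.mpr (hpos _ fun h => one_ne_zero (Finsupp.single_eq_zero.mp h))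

lemma rlen_sq (s t : E → V) (B : nQ s t →ₗ[ℝ] nQ s t →ₗ[ℝ] ℝ)
    (hpos : ∀ u : nQ s t, u ≠ 0 → 0 < B u u) (p : PathQ s t) :
    rlen s t B p * rlen s t B p = B (Finsupp.single p 1) (Finsupp.single p 1) :=
  Real.mul_self_sqrt (hpos _ fun h => one_ne_zero (Finsupp.single_eq_zero.mp h)).le

lemma B_single_single (s t : E → V) (B : nQ s t →ₗ[ℝ] nQ s t →ₗ[ℝ] ℝ)
    (hpos : ∀ u : nQ s t, u ≠ 0 → 0 < B u u)
    (horth : ∀ p q : PathQ s t, p ≠ q →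
      B (Finsupp.single p 1) (Finsupp.single q 1) = 0)
    (p q : PathQ s t) (c d : ℝ) :
    B (Finsupp.single p c) (Finsupp.single q d) =
      if p = q then c * d * (rlen s t B p * rlen s t B p) else 0 := by
  have h1 : (Finsupp.single p c : nQ s t) = c • Finsupp.single p 1 := by
    rw [Finsupp.smul_single', mul_one]
  have h2 : (Finsupp.single q d : nQ s t) = d • Finsupp.single q 1 := by
    rw [Finsupp.smul_single', mul_one]
  simp only [h1, h2, map_smul, LinearMap.smul_apply, smul_eq_mul]
  by_cases h : p = q
  · subst h; rw [if_pos rfl, rlen_sq s t B hpos]; ring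
  · rw [if_neg h, horth p q h, mul_zero, mul_zero]

end RLen
/-- Let `Q` be a finite quiver without cycles of length `m` with
starting set `S`, and let `⟨,⟩ = B` be an inner product on `n_Q` making `Path(Q)` an
orthogonal basis. Then for every `x ∈ S`, the Ricci operator of `(n_Q, B)` (the
operator determined by the standard formula with respect to the orthonormal basis of
normalized paths) satisfies
`Ric x̄ = (-(1/2) Σ_{y ∈ Path(Q), t(x) = s(y)} ⟨[x̄, ȳ], (xy)‾⟩²) • x̄`. -/
theorem ricci_of_startSet_arrow [Finite V] [Finite E] (s t : E → V)
    (hQ : NoCycles s t) (m : ℕ) (hm : IsMaxPathLen s t m)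
    (B : nQ s t →ₗ[ℝ] nQ s t →ₗ[ℝ] ℝ)
    (hsym : ∀ u v : nQ s t, B u v = B v u)
    (hpos : ∀ u : nQ s t, u ≠ 0 → 0 < B u u)
    (horth : ∀ p q : PathQ s t, p ≠ q →
      B (Finsupp.single p 1) (Finsupp.single q 1) = 0)
    (Ric : nQ s t →ₗ[ℝ] nQ s t)
    (hRic : ∀ X Y : nQ s t, B (Ric X) Y =
      -(1/2) * (∑ᶠ i : PathQ s t, ∑ᶠ j : PathQ s t,
        B (bra s t X (ebar s t B i)) (ebar s t B j) *
          B (bra s t Y (ebar s t B i)) (ebar s t B j))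
      + (1/4) * (∑ᶠ i : PathQ s t, ∑ᶠ j : PathQ s t,
        B (bra s t (ebar s t B i) (ebar s t B j)) X *
          B (bra s t (ebar s t B i) (ebar s t B j)) Y))
    (a : E) (ha : a ∈ startSet s t m) :
    Ric (ebar s t B (edgePath s t a)) =
      (-(1/2) * ∑ᶠ y : PathQ s t,
        (if h : IsPath s t (a :: y.val) then
          (B (bra s t (ebar s t B (edgePath s t a)) (ebar s t B y))
            (ebar s t B ⟨a :: y.val, h⟩)) ^ 2
        else 0)) • ebar s t B (edgePath s t a) := by
  classical
  haveI : Finite (PathQ s t) := pathQ_finite hm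
  haveI : Fintype (PathQ s t) := Fintype.ofFinite _
  set x : PathQ s t := edgePath s t a with hxdef
  have hxval : x.val = [a] := rfl
  have hrne : ∀ p : PathQ s t, rlen s t B p ≠ 0 := fun p => (rlen_pos s t B hpos p).ne'
  have hBe := B_single_single s t B hpos horth
  have heb := ebar_eq_single s t B
  have hnoend := no_path_ends_start hm ha
  -- any basis path of length ≥ 2 differs from x
  have hne_len : ∀ w : PathQ s t, 2 ≤ w.val.length → w ≠ x := by
    intro w hw hEq
    rw [hEq, hxval] at hw
    simp at hw
  -- brackets of basis paths are orthogonal to x̄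
  have hBB_x : ∀ i j : PathQ s t, B (braBasis s t i j) (ebar s t B x) = 0 := by
    intro i j
    have hlen : ∀ (l l' : List E), l ≠ [] → l' ≠ [] → ∀ h : IsPath s t (l ++ l'),
        (⟨l ++ l', h⟩ : PathQ s t) ≠ x := by
      intro l l' hl hl' h
      apply hne_len
      simp only [List.length_append]
      have h1 := List.length_pos_iff.mpr hl
      have h2 := List.length_pos_iff.mpr hl'
      omega
    rw [heb x]
    simp only [braBasis]
    split_ifs with h1 h2
    · rw [hBe, if_neg (hlen _ _ i.2.1 j.2.1 h1)]
    · rw [map_neg, LinearMap.neg_apply, hBe, if_neg (hlen _ _ j.2.1 i.2.1 h2), neg_zero]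
    · simp
  -- the (1/4)-term vanishes
  have hterm2 : ∀ Ye : nQ s t,
      (∑ i : PathQ s t, ∑ j : PathQ s t,
        B (bra s t (ebar s t B i) (ebar s t B j)) (ebar s t B x) *
          B (bra s t (ebar s t B i) (ebar s t B j)) Ye) = 0 := by
    intro Ye
    apply Finset.sum_eq_zero; intro i _
    apply Finset.sum_eq_zero; intro j _
    rw [heb i, heb j, bra_single_single, map_smul, LinearMap.smul_apply, hBB_x,
      smul_zero, zero_mul]
  -- the bracket of x̄ with a basis path
  have hbraX : ∀ i : PathQ s t, bra s t (ebar s t B x) (ebar s t B i) =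
      if h : IsPath s t (a :: i.val) then
        ((rlen s t B x)⁻¹ * (rlen s t B i)⁻¹) •
          Finsupp.single (⟨a :: i.val, h⟩ : PathQ s t) 1
      else 0 := by
    intro i
    rw [heb x, heb i, bra_single_single]
    simp only [braBasis, hxval, List.singleton_append]
    split_ifs with h1 h2
    · rfl
    · exact absurd h2 (hnoend i.val i.2.1)
    · exact smul_zero _
  have hFzero : ∀ i j : PathQ s t,
      (∀ h : IsPath s t (a :: i.val), j ≠ ⟨a :: i.val, h⟩) →
      B (bra s t (ebar s t B x) (ebar s t B i)) (ebar s t B j) = 0 := by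
    intro i j hj
    rw [hbraX]
    split_ifs with h
    · rw [map_smul, LinearMap.smul_apply, heb j, hBe,
        if_neg (fun hEq => hj h hEq.symm), smul_zero]
    · simp
  -- key uniqueness: if q ≠ x then [q̄, ēᵢ] ⊥ (a :: i)
  have hGzero : ∀ q : PathQ s t, q ≠ x → ∀ (i : PathQ s t) (h : IsPath s t (a :: i.val)),
      B (bra s t (Finsupp.single q 1) (ebar s t B i))
        (ebar s t B ⟨a :: i.val, h⟩) = 0 := by
    intro q hq i h
    rw [heb i, bra_single_single, map_smul, LinearMap.smul_apply]
    have hz : B (braBasis s t q i) (ebar s t B ⟨a :: i.val, h⟩) = 0 := by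
      simp only [braBasis]
      split_ifs with h1 h2
      · rw [heb, hBe, if_neg]
        intro hEq
        have hval : q.val ++ i.val = a :: i.val := congrArg Subtype.val hEq
        have hqa : q.val = [a] :=
          List.append_cancel_right (show q.val ++ i.val = [a] ++ i.val from hval)
        exact hq (Subtype.ext (hqa.trans hxval.symm))
      · rw [map_neg, LinearMap.neg_apply, heb, hBe, if_neg, neg_zero]
        intro hEq
        have hval : i.val ++ q.val = a :: i.val := congrArg Subtype.val hEq
        have hlq : q.val.length = 1 := by
          have hlen := congrArg List.length hval
          simp only [List.length_append, List.length_cons] at hlen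
          omega
        obtain ⟨c, hc⟩ := List.length_eq_one_iff.mp hlq
        rw [hc] at hval
        have hca : c = a := snoc_eq_cons_self _ _ _ hval
        rw [hc, hca] at h2
        exact hnoend i.val i.2.1 h2
      · simp
    rw [hz, smul_zero]
  -- nondegeneracy extension
  have hext : ∀ u w : nQ s t,
      (∀ p : PathQ s t, B u (Finsupp.single p 1) = B w (Finsupp.single p 1)) → u = w := by
    intro u w h
    have h2 : B u = B w := by
      apply Finsupp.lhom_ext
      intro p b
      have hb : (Finsupp.single p b : nQ s t) = b • Finsupp.single p 1 := by
        rw [Finsupp.smul_single', mul_one]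
      rw [hb, map_smul, map_smul, h p]
    by_contra hne
    have h3 := hpos (u - w) (sub_ne_zero.mpr hne)
    have h4 : B (u - w) = 0 := by rw [map_sub, h2, sub_self]
    rw [h4] at h3
    simp at h3
  apply hext
  intro p
  rw [hRic, map_smul, LinearMap.smul_apply, smul_eq_mul]
  simp only [finsum_eq_sum_of_fintype]
  rw [hterm2 (Finsupp.single p 1), mul_zero, add_zero]
  by_cases hp : p = x
  · subst hp
    have hBxx : B (ebar s t B x) (Finsupp.single x (1:ℝ)) = rlen s t B x := by
      rw [heb, hBe, if_pos rfl, mul_one, ← mul_assoc, inv_mul_cancel₀ (hrne x), one_mul]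
    have hG : ∀ i j : PathQ s t,
        B (bra s t (Finsupp.single x 1) (ebar s t B i)) (ebar s t B j)
          = rlen s t B x * B (bra s t (ebar s t B x) (ebar s t B i)) (ebar s t B j) := by
      intro i j
      rw [heb i, heb x, bra_single_single, bra_single_single]
      simp only [map_smul, LinearMap.smul_apply, smul_eq_mul]
      field_simp
      rw [mul_div_mul_right _ _ (hrne x)]
    have hinner : ∀ i : PathQ s t,
        (∑ j : PathQ s t,
          B (bra s t (ebar s t B x) (ebar s t B i)) (ebar s t B j) *
            (rlen s t B x *
              B (bra s t (ebar s t B x) (ebar s t B i)) (ebar s t B j)))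
          = rlen s t B x *
            (if h : IsPath s t (a :: i.val) then
              (B (bra s t (ebar s t B x) (ebar s t B i))
                (ebar s t B ⟨a :: i.val, h⟩)) ^ 2
            else 0) := by
      intro i
      by_cases hpath : IsPath s t (a :: i.val)
      · rw [Finset.sum_eq_single_of_mem (⟨a :: i.val, hpath⟩ : PathQ s t)
          (Finset.mem_univ _)
          (fun j _ hj => by rw [hFzero i j (fun _ => hj), zero_mul]), dif_pos hpath]
        ring
      · rw [dif_neg hpath, mul_zero]
        apply Finset.sum_eq_zero
        intro j _
        rw [hFzero i j (fun h => absurd h hpath), zero_mul]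
    rw [hBxx]
    simp only [hG]
    rw [Finset.sum_congr rfl (fun i _ => hinner i), ← Finset.mul_sum]
    ring
  · have hrhs : B (ebar s t B x) (Finsupp.single p (1:ℝ)) = 0 := by
      rw [heb, hBe, if_neg (fun hEq => hp hEq.symm)]
    rw [hrhs, mul_zero]
    have hS : (∑ i : PathQ s t, ∑ j : PathQ s t,
        B (bra s t (ebar s t B x) (ebar s t B i)) (ebar s t B j) *
          B (bra s t (Finsupp.single p 1) (ebar s t B i)) (ebar s t B j)) = 0 := by
      apply Finset.sum_eq_zero; intro i _
      apply Finset.sum_eq_zero; intro j _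
      by_cases hpath : IsPath s t (a :: i.val)
      · by_cases hj : j = ⟨a :: i.val, hpath⟩
        · subst hj
          rw [hGzero p hp i hpath, mul_zero]
        · rw [hFzero i j (fun _ => hj), zero_mul]
      · rw [hFzero i j (fun h => absurd h hpath), zero_mul]
    rw [hS, mul_zero]

end
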